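/- For every real number ℓ ≥ 0, every real number δ > 0, and every finite set P of r-cliques of G, let S_ℓ denote the set of r-cliques of G not in P whose (r,s)-clique core number is at most ℓ, and let F_ℓ denote the set of r-cliques of G not in P whose (r,s)-clique core number is at most ℓ and whose residual s-clique-degree with respect to P is strictly greater than ℓ · (C(s,r) + δ), where C(s,r) denotes the binomial coefficient s choose r. Then |F_ℓ| ≤ C(s,r) · |S_ℓ| / (C(s,r) + δ). -/

import Mathlib

open Finset

variable {V : Type*}

/-- The `(r,s)`-clique core number of an `r`-clique `R` in `G`: the largest `c ≥ 1` for which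
there is a set `𝒮` of `s`-cliques of `G` such that `R` is contained in at least one member of
`𝒮` and every `r`-clique contained in any member of `𝒮` is contained in at least `c` members
of `𝒮`; `0` if no such `c` exists. -/
noncomputable def coreNumber [Fintype V] [DecidableEq V] (G : SimpleGraph V)
    [DecidableRel G.Adj] (r s : ℕ) (R : Finset V) : ℕ :=
  sSup {c : ℕ | 1 ≤ c ∧ ∃ 𝒮 : Finset (Finset V),
    (∀ S ∈ 𝒮, S ∈ G.cliqueFinset s) ∧ (∃ S ∈ 𝒮, R ⊆ S) ∧
    ∀ R' ∈ G.cliqueFinset r, (∃ S ∈ 𝒮, R' ⊆ S) →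
      c ≤ (𝒮.filter (fun S => R' ⊆ S)).card}

/-- The residual `s`-clique-degree of an `r`-clique `R` with respect to a peeled set `P`:
the number of `s`-cliques of `G` containing `R` and containing no member of `P`. -/
def residualDeg [Fintype V] [DecidableEq V] (G : SimpleGraph V) [DecidableRel G.Adj]
    (s : ℕ) (P : Finset (Finset V)) (R : Finset V) : ℕ :=
  ((G.cliqueFinset s).filter (fun S => R ⊆ S ∧ ∀ Q ∈ P, ¬ Q ⊆ S)).card

def IsWitness [Fintype V] [DecidableEq V] (G : SimpleGraph V) [DecidableRel G.Adj]
    (r s : ℕ) (R : Finset V) (c : ℕ) (𝒮 : Finset (Finset V)) : Prop :=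
  (∀ S ∈ 𝒮, S ∈ G.cliqueFinset s) ∧ (∃ S ∈ 𝒮, R ⊆ S) ∧
    ∀ R' ∈ G.cliqueFinset r, (∃ S ∈ 𝒮, R' ⊆ S) →
      c ≤ (𝒮.filter (fun S => R' ⊆ S)).card

lemma coreNumber_eq [Fintype V] [DecidableEq V] (G : SimpleGraph V) [DecidableRel G.Adj]
    (r s : ℕ) (R : Finset V) :
    coreNumber G r s R = sSup {c : ℕ | 1 ≤ c ∧ ∃ 𝒮, IsWitness G r s R c 𝒮} := rfl

lemma witness_bound [Fintype V] [DecidableEq V] {G : SimpleGraph V} [DecidableRel G.Adj]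
    {r s : ℕ} (hrs : r ≤ s) {R : Finset V} {c : ℕ} {𝒮 : Finset (Finset V)}
    (hc : 1 ≤ c) (h : IsWitness G r s R c 𝒮) : c ≤ (G.cliqueFinset s).card := by
  obtain ⟨h1, ⟨S, hS, -⟩, h3⟩ := h
  have hSc := h1 S hS
  rw [SimpleGraph.mem_cliqueFinset_iff] at hSc
  obtain ⟨R', hR'S, hR'c⟩ := Finset.exists_subset_card_eq (s := S) (n := r) (hSc.2 ▸ hrs)
  have hR' : R' ∈ G.cliqueFinset r := by
    rw [SimpleGraph.mem_cliqueFinset_iff]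
    exact ⟨hSc.1.subset hR'S, hR'c⟩
  calc c ≤ (𝒮.filter (fun S => R' ⊆ S)).card := h3 R' hR' ⟨S, hS, hR'S⟩
    _ ≤ 𝒮.card := Finset.card_filter_le _ _
    _ ≤ (G.cliqueFinset s).card := Finset.card_le_card (fun T hT => h1 T hT)

lemma coreSet_bddAbove [Fintype V] [DecidableEq V] {G : SimpleGraph V} [DecidableRel G.Adj]
    {r s : ℕ} (hrs : r ≤ s) (R : Finset V) :
    BddAbove {c : ℕ | 1 ≤ c ∧ ∃ 𝒮, IsWitness G r s R c 𝒮} := by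
  refine ⟨(G.cliqueFinset s).card, fun c hc => ?_⟩
  obtain ⟨h1, 𝒮, h𝒮⟩ := hc
  exact witness_bound hrs h1 h𝒮

lemma le_coreNumber_of_witness [Fintype V] [DecidableEq V] {G : SimpleGraph V}
    [DecidableRel G.Adj] {r s : ℕ} (hrs : r ≤ s) {R : Finset V} {c : ℕ}
    {𝒮 : Finset (Finset V)} (hc : 1 ≤ c) (h : IsWitness G r s R c 𝒮) :
    c ≤ coreNumber G r s R :=
  le_csSup (coreSet_bddAbove hrs R) ⟨hc, 𝒮, h⟩

lemma exists_witness_of_le [Fintype V] [DecidableEq V] {G : SimpleGraph V}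
    [DecidableRel G.Adj] {r s : ℕ} (hrs : r ≤ s) {R : Finset V} {c : ℕ}
    (hc1 : 1 ≤ c) (hc : c ≤ coreNumber G r s R) : ∃ 𝒮, IsWitness G r s R c 𝒮 := by
  have hne : {c : ℕ | 1 ≤ c ∧ ∃ 𝒮, IsWitness G r s R c 𝒮}.Nonempty := by
    by_contra h
    rw [Set.not_nonempty_iff_eq_empty] at h
    rw [coreNumber_eq, h, csSup_empty] at hc
    simp at hc; omega
  have hmem := Nat.sSup_mem hne (coreSet_bddAbove hrs R)
  obtain ⟨h1, 𝒮, hw1, hw2, hw3⟩ := hmem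
  exact ⟨𝒮, hw1, hw2, fun R' hR' hex => le_trans hc (hw3 R' hR' hex)⟩

lemma exists_low [Fintype V] [DecidableEq V] (G : SimpleGraph V) [DecidableRel G.Adj]
    (r s : ℕ) (hrs : r < s) (ℓ : ℝ) (hℓ : 0 ≤ ℓ)
    (P : Finset (Finset V)) (Sl Fl : Finset (Finset V))
    (hSl_mem : ∀ R', R' ∈ G.cliqueFinset r → R' ∉ P →
      (coreNumber G r s R' : ℝ) ≤ ℓ → R' ∈ Sl)
    (hFl_core : ∀ R ∈ Fl, (coreNumber G r s R : ℝ) ≤ ℓ)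
    (𝒯 : Finset (Finset V))
    (hT : ∀ S ∈ 𝒯, S ∈ G.cliqueFinset s ∧ (∀ Q ∈ P, ¬ Q ⊆ S) ∧ ∃ R ∈ Fl, R ⊆ S)
    (hne : 𝒯.Nonempty) :
    ∃ R' ∈ Sl, (∃ S ∈ 𝒯, R' ⊆ S) ∧ ((𝒯.filter fun S => R' ⊆ S).card : ℝ) ≤ ℓ := by
  classical
  by_contra hcon
  push_neg at hcon
  set c : ℕ := ⌊ℓ⌋₊ + 1 with hc
  have hℓc : ℓ < (c : ℝ) := by rw [hc]; push_cast; exact Nat.lt_floor_add_one ℓ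
  have hcore_of_not : ∀ R', R' ∈ G.cliqueFinset r → (∃ S ∈ 𝒯, R' ⊆ S) → R' ∉ Sl →
      c ≤ coreNumber G r s R' := by
    intro R' hR' ⟨S, hS, hR'S⟩ hnot
    have hRP : R' ∉ P := fun hmem => (hT S hS).2.1 R' hmem hR'S
    have : ¬ (coreNumber G r s R' : ℝ) ≤ ℓ := fun h => hnot (hSl_mem R' hR' hRP h)
    push_neg at this
    exact (Nat.floor_lt hℓ).mpr this
  -- bad set and witnesses
  set 𝓑 : Finset (Finset V) :=
    (G.cliqueFinset r).filter (fun R'' => (∃ S ∈ 𝒯, R'' ⊆ S) ∧ R'' ∉ Sl) with h𝓑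
  have hW : ∀ R'' ∈ 𝓑, ∃ 𝒲, IsWitness G r s R'' c 𝒲 := by
    intro R'' hR''
    rw [h𝓑, Finset.mem_filter] at hR''
    exact exists_witness_of_le hrs.le (by omega)
      (hcore_of_not R'' hR''.1 hR''.2.1 hR''.2.2)
  choose! W hWspec using hW
  set 𝒮 : Finset (Finset V) := 𝒯 ∪ 𝓑.biUnion W with h𝒮
  -- subsets
  have hWsub : ∀ R'' ∈ 𝓑, W R'' ⊆ 𝒮 := fun R'' h =>
    (Finset.subset_biUnion_of_mem W h).trans Finset.subset_union_right
  obtain ⟨S₀, hS₀⟩ := hne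
  obtain ⟨R₀, hR₀Fl, hR₀S₀⟩ := (hT S₀ hS₀).2.2
  have hwit : IsWitness G r s R₀ c 𝒮 := by
    refine ⟨?_, ⟨S₀, Finset.mem_union_left _ hS₀, hR₀S₀⟩, ?_⟩
    · intro S hS
      rcases Finset.mem_union.mp hS with h | h
      · exact (hT S h).1
      · obtain ⟨R'', hR'', hSW⟩ := Finset.mem_biUnion.mp h
        exact (hWspec R'' hR'').1 S hSW
    · intro R' hR' ⟨S, hS, hR'S⟩
      rcases Finset.mem_union.mp hS with h | h
      · by_cases hmem : R' ∈ Sl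
        · have hlt := hcon R' hmem ⟨S, h, hR'S⟩
          have h1 : c ≤ (𝒯.filter fun S => R' ⊆ S).card := (Nat.floor_lt hℓ).mpr hlt
          exact h1.trans (Finset.card_le_card
            (Finset.filter_subset_filter _ Finset.subset_union_left))
        · have hB : R' ∈ 𝓑 := by
            rw [h𝓑, Finset.mem_filter]; exact ⟨hR', ⟨S, h, hR'S⟩, hmem⟩
          have hw := hWspec R' hB
          have := hw.2.2 R' hR' hw.2.1
          exact this.trans (Finset.card_le_card
            (Finset.filter_subset_filter _ (hWsub R' hB)))
      · obtain ⟨R'', hR'', hSW⟩ := Finset.mem_biUnion.mp h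
        have hw := hWspec R'' hR''
        have := hw.2.2 R' hR' ⟨S, hSW, hR'S⟩
        exact this.trans (Finset.card_le_card
          (Finset.filter_subset_filter _ (hWsub R'' hR'')))
  have hcore : c ≤ coreNumber G r s R₀ :=
    le_coreNumber_of_witness hrs.le (by omega) hwit
  have := hFl_core R₀ hR₀Fl
  have : (c : ℝ) ≤ ℓ := le_trans (Nat.cast_le.mpr hcore) this
  linarith

lemma peel_bound [Fintype V] [DecidableEq V] (G : SimpleGraph V) [DecidableRel G.Adj]
    (r s : ℕ) (hrs : r < s) (ℓ : ℝ) (hℓ : 0 ≤ ℓ)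
    (P : Finset (Finset V)) (Sl Fl : Finset (Finset V))
    (hSl_mem : ∀ R', R' ∈ G.cliqueFinset r → R' ∉ P →
      (coreNumber G r s R' : ℝ) ≤ ℓ → R' ∈ Sl)
    (hFl_core : ∀ R ∈ Fl, (coreNumber G r s R : ℝ) ≤ ℓ) :
    ∀ n (𝒯 : Finset (Finset V)), 𝒯.card ≤ n →
      (∀ S ∈ 𝒯, S ∈ G.cliqueFinset s ∧ (∀ Q ∈ P, ¬ Q ⊆ S) ∧ ∃ R ∈ Fl, R ⊆ S) →
      (𝒯.card : ℝ) ≤ ℓ * ((Sl.filter fun R' => ∃ S ∈ 𝒯, R' ⊆ S).card : ℝ) := by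
  classical
  intro n
  induction n with
  | zero =>
    intro 𝒯 hcard _
    simp only [Nat.le_zero, Finset.card_eq_zero] at hcard
    subst hcard; simpa using mul_nonneg hℓ (by positivity)
  | succ n ih =>
    intro 𝒯 hcard hT
    rcases Finset.eq_empty_or_nonempty 𝒯 with h | hne
    · subst h; simpa using mul_nonneg hℓ (by positivity)
    obtain ⟨R', hR'Sl, ⟨S₁, hS₁, hR'S₁⟩, hdeg⟩ :=
      exists_low G r s hrs ℓ hℓ P Sl Fl hSl_mem hFl_core 𝒯 hT hne
    set 𝒯' : Finset (Finset V) := 𝒯.filter (fun S => ¬ R' ⊆ S) with h𝒯'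
    have hsplit : (𝒯.filter fun S => R' ⊆ S).card + 𝒯'.card = 𝒯.card :=
      Finset.card_filter_add_card_filter_not _
    have hpos : 0 < (𝒯.filter fun S => R' ⊆ S).card :=
      Finset.card_pos.mpr ⟨S₁, Finset.mem_filter.mpr ⟨hS₁, hR'S₁⟩⟩
    have h𝒯'card : 𝒯'.card ≤ n := by omega
    have h𝒯'T : ∀ S ∈ 𝒯', S ∈ G.cliqueFinset s ∧ (∀ Q ∈ P, ¬ Q ⊆ S) ∧ ∃ R ∈ Fl, R ⊆ S :=
      fun S hS => hT S (Finset.filter_subset _ _ hS)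
    have hih := ih 𝒯' h𝒯'card h𝒯'T
    set A' := (Sl.filter fun R'' => ∃ S ∈ 𝒯', R'' ⊆ S) with hA'
    set A := (Sl.filter fun R'' => ∃ S ∈ 𝒯, R'' ⊆ S) with hA
    have hR'notA' : R' ∉ A' := by
      rw [hA', Finset.mem_filter]
      rintro ⟨-, S, hS, hR'S⟩
      exact (Finset.mem_filter.mp hS).2 hR'S
    have hinsert : insert R' A' ⊆ A := by
      intro x hx
      rcases Finset.mem_insert.mp hx with h | h
      · subst h; exact Finset.mem_filter.mpr ⟨hR'Sl, S₁, hS₁, hR'S₁⟩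
      · rw [hA', Finset.mem_filter] at h
        exact Finset.mem_filter.mpr ⟨h.1, h.2.imp fun S hS =>
          ⟨Finset.filter_subset _ _ hS.1, hS.2⟩⟩
    have hAcard : A'.card + 1 ≤ A.card := by
      have := Finset.card_le_card hinsert
      rwa [Finset.card_insert_of_notMem hR'notA'] at this
    have hAcardR : (A'.card : ℝ) + 1 ≤ (A.card : ℝ) := by exact_mod_cast hAcard
    have hcast : (𝒯.card : ℝ) = ((𝒯.filter fun S => R' ⊆ S).card : ℝ) + (𝒯'.card : ℝ) := by
      exact_mod_cast hsplit.symm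
    rw [hcast]
    nlinarith [hdeg, hih, hAcardR, hℓ]

/-- For every real `ℓ ≥ 0`, real `δ > 0`, and finite set `P` of `r`-cliques of `G`, letting
`Sl` be the set of `r`-cliques not in `P` with core number at most `ℓ`, and `Fl` the set of
`r`-cliques not in `P` with core number at most `ℓ` and residual `s`-clique-degree (w.r.t. `P`)
strictly greater than `ℓ * (C(s,r) + δ)`, we have `|Fl| ≤ C(s,r) * |Sl| / (C(s,r) + δ)`. -/
theorem stmt1 [Fintype V] [DecidableEq V] (G : SimpleGraph V) [DecidableRel G.Adj]
    (r s : ℕ) (hr : 1 ≤ r) (hrs : r < s)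
    (ℓ : ℝ) (hℓ : 0 ≤ ℓ) (δ : ℝ) (hδ : 0 < δ)
    (P : Finset (Finset V)) (hP : ∀ Q ∈ P, Q ∈ G.cliqueFinset r)
    (Sl : Finset (Finset V))
    (hSl : Sl = (G.cliqueFinset r).filter
      (fun R => R ∉ P ∧ (coreNumber G r s R : ℝ) ≤ ℓ))
    (Fl : Finset (Finset V))
    (hFl : Fl = (G.cliqueFinset r).filter
      (fun R => R ∉ P ∧ (coreNumber G r s R : ℝ) ≤ ℓ ∧
        ℓ * ((s.choose r : ℝ) + δ) < (residualDeg G s P R : ℝ))) :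
    (Fl.card : ℝ) ≤ (s.choose r : ℝ) * (Sl.card : ℝ) / ((s.choose r : ℝ) + δ) := by
  classical
  set C : ℕ := s.choose r with hC
  have hCδ : 0 < (C : ℝ) + δ := by positivity
  rcases Finset.eq_empty_or_nonempty Fl with hFlE | hFlne
  · rw [hFlE]; simp; positivity
  -- the set T of residual s-cliques containing a member of Fl
  set T : Finset (Finset V) := (G.cliqueFinset s).filter
    (fun S => (∀ Q ∈ P, ¬ Q ⊆ S) ∧ ∃ R ∈ Fl, R ⊆ S) with hTdef
  have hTprop : ∀ S ∈ T, S ∈ G.cliqueFinset s ∧ (∀ Q ∈ P, ¬ Q ⊆ S) ∧ ∃ R ∈ Fl, R ⊆ S := by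
    intro S hS; rw [hTdef, Finset.mem_filter] at hS; exact ⟨hS.1, hS.2⟩
  -- residual degree of Fl-members equals degree into T
  have hdegT : ∀ R ∈ Fl, residualDeg G s P R = (T.filter fun S => R ⊆ S).card := by
    intro R hR
    unfold residualDeg
    congr 1
    ext S
    simp only [Finset.mem_filter, hTdef]
    constructor
    · rintro ⟨hS, hRS, hres⟩
      exact ⟨⟨hS, hres, R, hR, hRS⟩, hRS⟩
    · rintro ⟨⟨hS, hres, -⟩, hRS⟩
      exact ⟨hS, hRS, hres⟩
  -- double counting
  have hswap : ∑ R ∈ Fl, (T.filter fun S => R ⊆ S).card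
      = ∑ S ∈ T, (Fl.filter fun R => R ⊆ S).card := by
    simp only [Finset.card_filter]
    exact Finset.sum_comm
  have hperS : ∀ S ∈ T, (Fl.filter fun R => R ⊆ S).card ≤ C := by
    intro S hS
    have hScard : S.card = s := (SimpleGraph.mem_cliqueFinset_iff.mp (hTprop S hS).1).2
    have hsub : (Fl.filter fun R => R ⊆ S) ⊆ S.powersetCard r := by
      intro R hR
      rw [Finset.mem_filter] at hR
      have hRcl : R ∈ G.cliqueFinset r := by
        rw [hFl] at hR; exact (Finset.mem_filter.mp hR.1).1
      have hRcard : R.card = r := (SimpleGraph.mem_cliqueFinset_iff.mp hRcl).2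
      exact Finset.mem_powersetCard.mpr ⟨hR.2, hRcard⟩
    calc (Fl.filter fun R => R ⊆ S).card ≤ (S.powersetCard r).card :=
          Finset.card_le_card hsub
      _ = s.choose r := by rw [Finset.card_powersetCard, hScard]
  have hsum_ub : ∑ R ∈ Fl, (T.filter fun S => R ⊆ S).card ≤ T.card * C := by
    rw [hswap]
    calc ∑ S ∈ T, (Fl.filter fun R => R ⊆ S).card ≤ ∑ _S ∈ T, C :=
          Finset.sum_le_sum hperS
      _ = T.card * C := by rw [Finset.sum_const, smul_eq_mul]
  -- lower bound on the sum
  have hsum_lb : (Fl.card : ℝ) * (ℓ * ((C : ℝ) + δ))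
      < ∑ R ∈ Fl, ((T.filter fun S => R ⊆ S).card : ℝ) := by
    have := Finset.sum_lt_sum_of_nonempty hFlne (f := fun _ => ℓ * ((C : ℝ) + δ))
      (g := fun R => ((T.filter fun S => R ⊆ S).card : ℝ)) ?_
    · rwa [Finset.sum_const, nsmul_eq_mul] at this
    · intro R hR
      rw [← hdegT R hR]
      rw [hFl, Finset.mem_filter] at hR
      exact hR.2.2.2
  -- peeling bound on T
  have hTbound : (T.card : ℝ) ≤ ℓ * (Sl.card : ℝ) := by
    have hSl_mem : ∀ R', R' ∈ G.cliqueFinset r → R' ∉ P →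
        (coreNumber G r s R' : ℝ) ≤ ℓ → R' ∈ Sl := by
      intro R' h1 h2 h3; rw [hSl, Finset.mem_filter]; exact ⟨h1, h2, h3⟩
    have hFl_core : ∀ R ∈ Fl, (coreNumber G r s R : ℝ) ≤ ℓ := by
      intro R hR; rw [hFl, Finset.mem_filter] at hR; exact hR.2.2.1
    have := peel_bound G r s hrs ℓ hℓ P Sl Fl hSl_mem hFl_core T.card T le_rfl hTprop
    calc (T.card : ℝ) ≤ ℓ * ((Sl.filter fun R' => ∃ S ∈ T, R' ⊆ S).card : ℝ) := this
      _ ≤ ℓ * (Sl.card : ℝ) := by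
          apply mul_le_mul_of_nonneg_left _ hℓ
          exact_mod_cast Finset.card_le_card (Finset.filter_subset _ _)
  -- combine
  have hchain : (Fl.card : ℝ) * (ℓ * ((C : ℝ) + δ)) < (ℓ * (Sl.card : ℝ)) * (C : ℝ) := by
    calc (Fl.card : ℝ) * (ℓ * ((C : ℝ) + δ))
        < ∑ R ∈ Fl, ((T.filter fun S => R ⊆ S).card : ℝ) := hsum_lb
      _ ≤ (T.card : ℝ) * (C : ℝ) := by exact_mod_cast hsum_ub
      _ ≤ (ℓ * (Sl.card : ℝ)) * (C : ℝ) := by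
          apply mul_le_mul_of_nonneg_right hTbound (by positivity)
  rcases eq_or_lt_of_le hℓ with hℓ0 | hℓpos
  · exfalso; rw [← hℓ0] at hchain; simp at hchain
  · rw [le_div_iff₀ hCδ]
    have : ℓ * ((Fl.card : ℝ) * ((C : ℝ) + δ)) < ℓ * ((C : ℝ) * (Sl.card : ℝ)) := by
      ring_nf; ring_nf at hchain; linarith
    exact (lt_of_mul_lt_mul_left this hℓ).le
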